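/- For all n ≥ 1, p(q(n)) = p(n) + q(n). -/
import Mathlib


/-- Wythoff sequences: `p 1 = 1`, `q n = p n + n` for `n ≥ 1`, and `p (n+1)` is the
smallest positive integer not contained in `U_n = {p 1, …, p n, q 1, …, q n}`. -/

theorem stmt_10 (p q : ℕ → ℕ)
    (hp1 : p 1 = 1)
    (hq : ∀ n, 1 ≤ n → q n = p n + n)
    (hmin : ∀ n, 1 ≤ n →
      IsLeast {m : ℕ | 0 < m ∧ ∀ i, 1 ≤ i → i ≤ n → m ≠ p i ∧ m ≠ q i} (p (n + 1))) :
    ∀ n, 1 ≤ n → p (q n) = p n + q n := by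
  classical
  -- positivity
  have hpos : ∀ n, 1 ≤ n → 0 < p n := by
    intro n hn
    obtain _ | (_ | m) := n
    · omega
    · simp [hp1]
    · exact (hmin (m+1) (by omega)).1.1
  -- every positive m < p (n+1) is some p i or q i with i ≤ n
  have hA : ∀ n, 1 ≤ n → ∀ m, 0 < m → m < p (n+1) →
      ∃ i, 1 ≤ i ∧ i ≤ n ∧ (p i = m ∨ q i = m) := by
    intro n hn m hm hlt
    by_contra h
    push_neg at h
    have hmem : m ∈ {m : ℕ | 0 < m ∧ ∀ i, 1 ≤ i → i ≤ n → m ≠ p i ∧ m ≠ q i} := by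
      refine ⟨hm, fun i h1 h2 => ?_⟩
      have h3 := h i h1 h2
      constructor
      · intro e; exact h3.1 e.symm
      · intro e; exact h3.2 e.symm
    have := (hmin n hn).2 hmem
    omega
  -- p is strictly increasing at successors
  have hmono : ∀ n, 1 ≤ n → p n < p (n+1) := by
    intro n hn
    by_contra hle
    push_neg at hle
    have hppos := (hmin n hn).1.1
    have hne : p (n+1) ≠ p n := ((hmin n hn).1.2 n hn le_rfl).1
    obtain _ | (_ | m) := n
    · omega
    · rw [hp1] at hle hne; omega
    · have hlt : p (m+2+1) < p (m+1+1) := lt_of_le_of_ne hle hne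
      obtain ⟨i, h1, h2, h3⟩ := hA (m+1) (by omega) (p (m+2+1)) hppos hlt
      have h4 := (hmin (m+2) (by omega)).1.2 i h1 (by omega)
      rcases h3 with h3 | h3
      · exact h4.1 h3.symm
      · exact h4.2 h3.symm
  -- monotonicity
  have hple : ∀ j i, 1 ≤ i → i ≤ j → p i ≤ p j := by
    intro j
    induction j with
    | zero => intro i hi hij; omega
    | succ j ih =>
      intro i hi hij
      rcases Nat.eq_or_lt_of_le hij with h | h
      · rw [h]
      · exact le_trans (ih i hi (by omega)) (le_of_lt (hmono j (by omega)))
  have hplt : ∀ i j, 1 ≤ i → i < j → p i < p j := by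
    intro i j hi hij
    have h1 : p i ≤ p (j-1) := hple (j-1) i hi (by omega)
    have h2 : p (j-1) < p j := by
      have h3 := hmono (j-1) (by omega)
      have hj : j - 1 + 1 = j := by omega
      rwa [hj] at h3
    omega
  have hpge : ∀ n, 1 ≤ n → n ≤ p n := by
    intro n hn
    induction n with
    | zero => omega
    | succ n ih =>
      rcases Nat.eq_zero_or_pos n with h | h
      · subst h; simp [hp1]
      · have h1 := ih h
        have h2 := hmono n h
        omega
  have hqlt : ∀ i j, 1 ≤ i → i < j → q i < q j := by
    intro i j hi hij
    rw [hq i hi, hq j (by omega)]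
    have := hplt i j hi hij
    omega
  -- disjointness of p-values and q-values
  have hdisj : ∀ i j, 1 ≤ i → 1 ≤ j → p i ≠ q j := by
    intro i j hi hj
    rcases le_or_gt i j with h | h
    · have h1 : p i ≤ p j := hple j i hi h
      rw [hq j hj]; omega
    · have h2 := ((hmin (i-1) (by omega)).1.2 j hj (by omega)).2
      have hi1 : i - 1 + 1 = i := by omega
      rw [hi1] at h2
      exact h2
  -- surjectivity onto positive integers
  have hsurj : ∀ m, 0 < m → ∃ i, 1 ≤ i ∧ (p i = m ∨ q i = m) := by
    intro m hm
    have hlt : m < p (m+1) := by have := hpge (m+1) (by omega); omega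
    obtain ⟨i, h1, _, h3⟩ := hA m hm m hm hlt
    exact ⟨i, h1, h3⟩
  -- existence of the "bracketing index" for p
  have hexA : ∀ N, 1 ≤ N → ∃ a, 1 ≤ a ∧ p a ≤ N ∧ N < p (a+1) := by
    intro N hN
    have hex : ∃ k, N < p (k+1) := ⟨N, by have := hpge (N+1) (by omega); omega⟩
    have h1 : N < p (Nat.find hex + 1) := Nat.find_spec hex
    have hpos' : 1 ≤ Nat.find hex := by
      rcases Nat.eq_zero_or_pos (Nat.find hex) with h | h
      · rw [h] at h1; norm_num [hp1] at h1; omega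
      · exact h
    have h2 : p (Nat.find hex) ≤ N := by
      have h3 := Nat.find_min hex (show Nat.find hex - 1 < Nat.find hex by omega)
      push_neg at h3
      have e : Nat.find hex - 1 + 1 = Nat.find hex := by omega
      rwa [e] at h3
    exact ⟨Nat.find hex, hpos', h2, h1⟩
  -- counting lemma
  have hcount : ∀ N a b, 1 ≤ a → 1 ≤ b → p a ≤ N → N < p (a+1) → q b ≤ N → N < q (b+1) →
      a + b = N := by
    intro N a b ha hb hpa hpa' hqb hqb'
    have hunion : (Finset.Icc 1 a).image p ∪ (Finset.Icc 1 b).image q = Finset.Icc 1 N := by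
      ext m
      simp only [Finset.mem_union, Finset.mem_image, Finset.mem_Icc]
      constructor
      · rintro (⟨i, ⟨hi1, hi2⟩, rfl⟩ | ⟨i, ⟨hi1, hi2⟩, rfl⟩)
        · exact ⟨hpos i hi1, le_trans (hple a i hi1 hi2) hpa⟩
        · refine ⟨?_, ?_⟩
          · rw [hq i hi1]; have := hpos i hi1; omega
          · rcases Nat.eq_or_lt_of_le hi2 with h | h
            · rw [h]; exact hqb
            · exact le_trans (le_of_lt (hqlt i b hi1 h)) hqb
      · rintro ⟨hm1, hm2⟩
        obtain ⟨i, hi1, h | h⟩ := hsurj m hm1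
        · left
          refine ⟨i, ⟨hi1, ?_⟩, h⟩
          by_contra hc
          push_neg at hc
          have := hple i (a+1) (by omega) (by omega)
          omega
        · right
          refine ⟨i, ⟨hi1, ?_⟩, h⟩
          by_contra hc
          push_neg at hc
          have h5 : q (b+1) ≤ q i := by
            rcases Nat.eq_or_lt_of_le (show b + 1 ≤ i by omega) with h6 | h6
            · rw [h6]
            · exact le_of_lt (hqlt (b+1) i (by omega) h6)
          omega
    have hdis : Disjoint ((Finset.Icc 1 a).image p) ((Finset.Icc 1 b).image q) := by
      rw [Finset.disjoint_left]
      intro m hm1 hm2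
      simp only [Finset.mem_image, Finset.mem_Icc] at hm1 hm2
      obtain ⟨i, ⟨hi1, _⟩, rfl⟩ := hm1
      obtain ⟨j, ⟨hj1, _⟩, hj⟩ := hm2
      exact hdisj i j hi1 hj1 hj.symm
    have hc1 : ((Finset.Icc 1 a).image p).card = a := by
      rw [Finset.card_image_of_injOn, Nat.card_Icc]
      · omega
      · intro x hx y hy hxy
        simp only [Finset.coe_Icc, Set.mem_Icc] at hx hy
        by_contra hne
        rcases lt_or_gt_of_ne hne with h | h
        · exact absurd hxy (ne_of_lt (hplt x y hx.1 h))
        · exact absurd hxy.symm (ne_of_lt (hplt y x hy.1 h))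
    have hc2 : ((Finset.Icc 1 b).image q).card = b := by
      rw [Finset.card_image_of_injOn, Nat.card_Icc]
      · omega
      · intro x hx y hy hxy
        simp only [Finset.coe_Icc, Set.mem_Icc] at hx hy
        by_contra hne
        rcases lt_or_gt_of_ne hne with h | h
        · exact absurd hxy (ne_of_lt (hqlt x y hx.1 h))
        · exact absurd hxy.symm (ne_of_lt (hqlt y x hy.1 h))
    have hcard := Finset.card_union_of_disjoint hdis
    rw [hunion, hc1, hc2, Nat.card_Icc] at hcard
    omega
  -- main proof
  intro n hn
  rcases Nat.eq_or_lt_of_le hn with h1 | h2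
  · -- n = 1
    obtain rfl : n = 1 := h1.symm
    have hq1 : q 1 = 2 := by rw [hq 1 le_rfl, hp1]
    have hp2 : p 2 = 3 := by
      have hmem := (hmin 1 le_rfl).1
      have hne := hmem.2 1 le_rfl le_rfl
      rw [hp1, hq1] at hne
      have hub : p (1+1) ≤ 3 := by
        refine (hmin 1 le_rfl).2 ⟨by norm_num, fun i hi1 hi2 => ?_⟩

        have : i = 1 := le_antisymm hi2 hi1
        subst this
        rw [hp1, hq1]
        omega
      have hpos' := hmem.1
      have e2 : (1:ℕ) + 1 = 2 := rfl
      rw [e2] at hne hub hpos'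
      omega
    rw [hq1, hp2, hp1]
  · -- n ≥ 2
    have hn2 : 2 ≤ n := h2
    have hqn : q n = p n + n := hq n hn
    have hpn1 : 1 ≤ p n := hpos n hn
    -- first count: at N = q n - 1, with b = n - 1
    obtain ⟨a₁, ha₁, hpa₁, hpa₁'⟩ := hexA (q n - 1) (by omega)
    have hb1 : q (n-1) ≤ q n - 1 := by
      have := hqlt (n-1) n (by omega) (by omega); omega
    have hb2 : q n - 1 < q (n - 1 + 1) := by
      have e : n - 1 + 1 = n := by omega
      rw [e]; omega
    have hcnt1 := hcount (q n - 1) a₁ (n-1) ha₁ (by omega) hpa₁ hpa₁' hb1 hb2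
    have ha₁eq : a₁ = p n := by omega
    rw [ha₁eq] at hpa₁ hpa₁'
    -- now: p (p n) ≤ q n - 1 and q n - 1 < p (p n + 1)
    have hqpn : q (p n) = p (p n) + p n := hq (p n) hpn1
    have hqpn1 : q (p n + 1) = p (p n + 1) + (p n + 1) := hq (p n + 1) (by omega)
    -- count at M - 1 = p n + q n - 1
    obtain ⟨a₂, ha₂, hpa₂, hpa₂'⟩ := hexA (p n + q n - 1) (by omega)
    have hc2 := hcount (p n + q n - 1) a₂ (p n) ha₂ hpn1 hpa₂ hpa₂' (by omega) (by omega)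
    -- count at M = p n + q n
    obtain ⟨a₃, ha₃, hpa₃, hpa₃'⟩ := hexA (p n + q n) (by omega)
    have hc3 := hcount (p n + q n) a₃ (p n) ha₃ hpn1 hpa₃ hpa₃' (by omega) (by omega)
    have ha₂eq : a₂ = q n - 1 := by omega
    have ha₃eq : a₃ = q n := by omega
    rw [ha₂eq] at hpa₂'
    rw [ha₃eq] at hpa₃
    have e : q n - 1 + 1 = q n := by omega
    rw [e] at hpa₂'
    omega
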